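/- Define Δ̃(w) = 4bβ·w² + (d² − 20dbβ − 8b²β²)·w + 4(bβ − d)³ for w ∈ ℝ. Then Δ̃(bβ + 2d) = −d(2d² + 11dbβ + 32b²β²), which is strictly negative; consequently the quadratic Δ̃ has two distinct real roots, one strictly less than bβ + 2d and one strictly greater than bβ + 2d. -/
import Mathlib

lemma quad_roots (a B C p : ℝ) (ha : 0 < a)
    (hp : a * p ^ 2 + B * p + C < 0) :
    ∃ w1 w2 : ℝ, w1 < p ∧ p < w2 ∧
      a * w1 ^ 2 + B * w1 + C = 0 ∧ a * w2 ^ 2 + B * w2 + C = 0 := by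
  set s := Real.sqrt (B ^ 2 - 4 * a * C) with hs
  have hdisc : 0 ≤ B ^ 2 - 4 * a * C := by nlinarith [sq_nonneg (2 * a * p + B)]
  have hs0 : 0 ≤ s := Real.sqrt_nonneg _
  have hs2 : s ^ 2 = B ^ 2 - 4 * a * C := Real.sq_sqrt hdisc
  have hkey : (2 * a * p + B) ^ 2 < s ^ 2 := by nlinarith
  refine ⟨(-B - s) / (2 * a), (-B + s) / (2 * a), ?_, ?_, ?_, ?_⟩
  · rw [div_lt_iff₀ (by linarith)]; nlinarith [abs_nonneg (2 * a * p + B),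
      sq_abs (2 * a * p + B), neg_abs_le (2 * a * p + B), le_abs_self (2 * a * p + B)]
  · rw [lt_div_iff₀ (by linarith)]; nlinarith [sq_abs (2 * a * p + B),
      neg_abs_le (2 * a * p + B), le_abs_self (2 * a * p + B)]
  · field_simp; nlinarith [hs2]
  · field_simp; nlinarith [hs2]

/-- For `Δ̃(w) = 4bβ·w² + (d² − 20dbβ − 8b²β²)·w + 4(bβ − d)³`,
one has `Δ̃(bβ + 2d) = −d(2d² + 11dbβ + 32b²β²) < 0`; consequently the
quadratic `Δ̃` has two distinct real roots, one strictly less than `bβ + 2d`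
and one strictly greater than `bβ + 2d`. -/
theorem stmt14 (d β b : ℝ)
    (hd : 0 < d) (hβ : 0 < β) (hb : 0 < b)
    (Δtilde : ℝ → ℝ)
    (hΔtilde : ∀ w, Δtilde w = 4 * b * β * w ^ 2
      + (d ^ 2 - 20 * d * b * β - 8 * b ^ 2 * β ^ 2) * w
      + 4 * (b * β - d) ^ 3) :
    Δtilde (b * β + 2 * d)
        = -(d * (2 * d ^ 2 + 11 * d * b * β + 32 * b ^ 2 * β ^ 2)) ∧
    Δtilde (b * β + 2 * d) < 0 ∧
    ∃ w1 w2 : ℝ, w1 < b * β + 2 * d ∧ b * β + 2 * d < w2 ∧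
      Δtilde w1 = 0 ∧ Δtilde w2 = 0 := by
  have hval : Δtilde (b * β + 2 * d)
      = -(d * (2 * d ^ 2 + 11 * d * b * β + 32 * b ^ 2 * β ^ 2)) := by
    rw [hΔtilde]; ring
  have hneg : Δtilde (b * β + 2 * d) < 0 := by
    rw [hval]; nlinarith [mul_pos hb hβ, mul_pos (mul_pos hb hβ) (mul_pos hb hβ)]
  refine ⟨hval, hneg, ?_⟩
  have hp : 4 * b * β * (b * β + 2 * d) ^ 2
      + (d ^ 2 - 20 * d * b * β - 8 * b ^ 2 * β ^ 2) * (b * β + 2 * d)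
      + 4 * (b * β - d) ^ 3 < 0 := by rw [← hΔtilde]; exact hneg
  obtain ⟨w1, w2, h1, h2, e1, e2⟩ :=
    quad_roots (4 * b * β) (d ^ 2 - 20 * d * b * β - 8 * b ^ 2 * β ^ 2)
      (4 * (b * β - d) ^ 3) (b * β + 2 * d) (by positivity) hp
  exact ⟨w1, w2, h1, h2, by rw [hΔtilde]; exact e1, by rw [hΔtilde]; exact e2⟩
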